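/- Let X ⊆ ℕ and let ⟨T_i : i ∈ X⟩ be trees, each of which is good, and let A = { i ∈ X : T_i codes the bit 1 }. Let S be the tree formed by combining ⟨T_i : i ∈ X⟩ at a root r, i.e., S = {r} ∪ { r ++ [c(i,j)] ++ σ : i ∈ X, j ∈ {0,1}, σ ∈ T_i }, where c is a fixed injection of ℕ × {0,1} into ℕ. Then S is good, and S codes the bit 0 if and only if A = X (i.e., iff every T_i codes the bit 1). -/

import Mathlib

/-- `(C, M)` is a König cover of the simple graph `G`. -/
def IsKonigCover {V : Type*} (G : SimpleGraph V) (C : Set V) (M : Set (Sym2 V)) : Prop :=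
  M ⊆ G.edgeSet ∧
  (M.Pairwise fun e f => ∀ v, v ∈ e → v ∉ f) ∧
  (∀ e ∈ G.edgeSet, ∃ v ∈ e, v ∈ C) ∧
  (∀ e ∈ M, ∃! v, v ∈ e ∧ v ∈ C) ∧
  (∀ v ∈ C, ∃ e ∈ M, v ∈ e)

/-- A tree `T ⊆ List ℕ` viewed as a graph: edges join each `σ ∈ T` to its one-step
extensions in `T`. -/
def treeGraph (T : Set (List ℕ)) : SimpleGraph (List ℕ) where
  Adj s t := s ∈ T ∧ t ∈ T ∧ ((∃ n, t = s ++ [n]) ∨ ∃ n, s = t ++ [n])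
  symm := by
    constructor
    rintro s t ⟨hs, ht, h | h⟩
    · exact ⟨ht, hs, Or.inr h⟩
    · exact ⟨ht, hs, Or.inl h⟩
  loopless := by
    constructor
    rintro s ⟨-, -, ⟨n, h⟩ | ⟨n, h⟩⟩ <;>
      simpa using congrArg List.length h

/-- The tree obtained by combining the trees `⟨T i : i ∈ X⟩` at a root `r`: two copies
of each `T i` are adjoined to `r`, using the injection `c(i, j) = 2 * i + j` of
`ℕ × {0, 1}` into `ℕ`. -/
def combineAt (r : List ℕ) (X : Set ℕ) (T : ℕ → Set (List ℕ)) : Set (List ℕ) :=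
  {r} ∪ {l | ∃ i ∈ X, ∃ j : Fin 2, ∃ σ ∈ T i, l = r ++ [2 * i + j] ++ σ}

/-- A rooted tree with root `r` codes the bit 1 if the root lies in the cover of every
König cover of it. -/
def CodesOne (r : List ℕ) (T : Set (List ℕ)) : Prop :=
  ∀ (C : Set (List ℕ)) (M : Set (Sym2 (List ℕ))),
    IsKonigCover (treeGraph T) C M → r ∈ C

/-- A rooted tree with root `r` codes the bit 0 if the root lies outside the cover of
every König cover of it. -/
def CodesZero (r : List ℕ) (T : Set (List ℕ)) : Prop :=
  ∀ (C : Set (List ℕ)) (M : Set (Sym2 (List ℕ))),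
    IsKonigCover (treeGraph T) C M → r ∉ C

/-- A rooted tree with root `r` is good if all of its König covers code the same bit. -/
def Good (r : List ℕ) (T : Set (List ℕ)) : Prop :=
  CodesOne r T ∨ CodesZero r T

noncomputable section

namespace KC

/-- concat injectivity -/
lemma concat_inj {a b : List ℕ} {m n : ℕ} (h : a ++ [m] = b ++ [n]) : a = b ∧ m = n := by
  obtain ⟨h1, h2⟩ := List.append_inj' h rfl
  exact ⟨h1, by simpa using h2⟩

/-- children of `v` in `U` -/
def Ch (U : Set (List ℕ)) (v : List ℕ) : Set (List ℕ) :=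
  {u | u ∈ U ∧ ∃ n, u = v ++ [n]}

def theta (U : Set (List ℕ)) : Set (List ℕ) →o Set (List ℕ) where
  toFun L := {v | v ∈ U ∧ ∀ u ∈ Ch U v, ∃ w ∈ Ch U u, w ∈ L}
  monotone' := by
    intro a b hab v hv
    exact ⟨hv.1, fun u hu => (hv.2 u hu).imp fun w hw => ⟨hw.1, hab hw.2⟩⟩

def Lset (U : Set (List ℕ)) : Set (List ℕ) := (theta U).lfp

def Wset (U : Set (List ℕ)) : Set (List ℕ) :=
  {v | v ∈ U ∧ ∃ u ∈ Ch U v, u ∈ Lset U}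

def Dset (U : Set (List ℕ)) : Set (List ℕ) := U \ (Lset U ∪ Wset U)

lemma Lset_fixed (U : Set (List ℕ)) :
    Lset U = {v | v ∈ U ∧ ∀ u ∈ Ch U v, ∃ w ∈ Ch U u, w ∈ Lset U} :=
  ((theta U).map_lfp).symm

lemma Lset_subset (U : Set (List ℕ)) : Lset U ⊆ U := by
  rw [Lset_fixed]; exact fun v hv => hv.1

lemma mem_Lset {U : Set (List ℕ)} {v : List ℕ} :
    v ∈ Lset U ↔ v ∈ U ∧ ∀ u ∈ Ch U v, u ∈ Wset U := by
  constructor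
  · intro hv
    rw [Lset_fixed] at hv
    exact ⟨hv.1, fun u hu => ⟨hu.1, hv.2 u hu⟩⟩
  · intro hv
    rw [Lset_fixed]
    exact ⟨hv.1, fun u hu => (hv.2 u hu).2⟩

lemma Lset_disj_Wset {U : Set (List ℕ)} : ∀ v ∈ Lset U, v ∉ Wset U := by
  have : Lset U ⊆ (Wset U)ᶜ := by
    apply OrderHom.lfp_induction (p := fun a => a ≤ (Wset U)ᶜ)
    · intro a ha _ v hv hvW
      obtain ⟨-, u, hu, huL⟩ := hvW
      have h1 : ∀ w ∈ Ch U u, w ∈ Wset U := (mem_Lset.mp huL).2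
      obtain ⟨w, hw, hwa⟩ := hv.2 u hu
      exact ha hwa (h1 w hw)
    · intro s hs v hv
      rw [sSup_eq_iSup', Set.iSup_eq_iUnion, Set.mem_iUnion] at hv
      obtain ⟨⟨t, ht⟩, hvt⟩ := hv
      exact hs t ht hvt
  exact fun v hv => this hv

def epsAux (U : Set (List ℕ)) : List ℕ → Prop
  | [] => True
  | _ :: l => ¬ (l.reverse ∈ Dset U ∧ epsAux U l)

def eps (U : Set (List ℕ)) (v : List ℕ) : Prop := epsAux U v.reverse

lemma eps_concat {U : Set (List ℕ)} (q : List ℕ) (n : ℕ) :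
    eps U (q ++ [n]) ↔ ¬ (q ∈ Dset U ∧ eps U q) := by
  simp [eps, epsAux, List.reverse_append]

def Eset (U : Set (List ℕ)) : Set (List ℕ) :=
  Lset U ∪ {v | v ∈ Dset U ∧ eps U v}

lemma Eset_subset (U : Set (List ℕ)) : Eset U ⊆ U := by
  rintro v (hv | hv)
  · exact Lset_subset U hv
  · exact hv.1.1

lemma D_child {U : Set (List ℕ)} {v : List ℕ} (hv : v ∈ Dset U) :
    ∃ u ∈ Ch U v, u ∈ Dset U := by
  have hvL : v ∉ Lset U := fun h => hv.2 (Or.inl h)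
  have hvU : v ∈ U := hv.1
  rw [mem_Lset] at hvL
  push_neg at hvL
  obtain ⟨u, hu, huW⟩ := hvL hvU
  refine ⟨u, hu, hu.1, fun h => ?_⟩
  rcases h with h | h
  · exact hv.2 (Or.inr ⟨hvU, u, hu, h⟩)
  · exact huW h

lemma D_child_not_L {U : Set (List ℕ)} {v u : List ℕ} (hv : v ∈ Dset U)
    (hu : u ∈ Ch U v) : u ∉ Lset U :=
  fun h => hv.2 (Or.inr ⟨hv.1, u, hu, h⟩)

lemma kernel (U : Set (List ℕ)) :
    ∀ v ∈ U, (v ∈ Eset U ↔ ∀ u ∈ Ch U v, u ∉ Eset U) := by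
  intro v hvU
  by_cases hL : v ∈ Lset U
  · refine iff_of_true (Or.inl hL) ?_
    intro u hu huE
    have huW : u ∈ Wset U := (mem_Lset.mp hL).2 u hu
    rcases huE with h | h
    · exact Lset_disj_Wset u h huW
    · exact h.1.2 (Or.inr huW)
  by_cases hW : v ∈ Wset U
  · refine iff_of_false ?_ ?_
    · rintro (h | h)
      · exact hL h
      · exact h.1.2 (Or.inr hW)
    · intro hall
      obtain ⟨-, u, hu, huL⟩ := hW
      exact hall u hu (Or.inl huL)
  have hvD : v ∈ Dset U := ⟨hvU, fun h => h.elim hL hW⟩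
  by_cases he : eps U v
  · refine iff_of_true (Or.inr ⟨hvD, he⟩) ?_
    intro u hu huE
    rcases huE with h | h
    · exact D_child_not_L hvD hu h
    · obtain ⟨n, rfl⟩ := hu.2
      exact (eps_concat v n).mp h.2 ⟨hvD, he⟩
  · refine iff_of_false ?_ ?_
    · rintro (h | h)
      · exact hL h
      · exact he h.2
    · intro hall
      obtain ⟨u, hu, huD⟩ := D_child hvD
      apply hall u hu
      refine Or.inr ⟨huD, ?_⟩
      obtain ⟨n, rfl⟩ := hu.2
      rw [eps_concat]
      exact fun h => he h.2

open Classical in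
def mate (U : Set (List ℕ)) (v : List ℕ) : List ℕ :=
  if h : ∃ u, u ∈ Ch U v ∧ u ∈ Eset U then h.choose else []

lemma mate_spec {U : Set (List ℕ)} {v : List ℕ} (hv : v ∈ U) (hv' : v ∉ Eset U) :
    mate U v ∈ Ch U v ∧ mate U v ∈ Eset U := by
  have h : ∃ u, u ∈ Ch U v ∧ u ∈ Eset U := by
    by_contra hc
    push_neg at hc
    exact hv' ((kernel U v hv).mpr fun u hu huE => hc u hu huE)
  rw [mate, dif_pos h]
  exact h.choose_spec

theorem exists_cover (U : Set (List ℕ)) :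
    ∃ C M, IsKonigCover (treeGraph U) C M := by
  classical
  refine ⟨U \ Eset U, {e | ∃ v ∈ U \ Eset U, e = s(v, mate U v)}, ?_, ?_, ?_, ?_, ?_⟩
  · rintro e ⟨v, hv, rfl⟩
    obtain ⟨⟨hmU, n, hn⟩, -⟩ := mate_spec hv.1 hv.2
    exact ⟨hv.1, hmU, Or.inl ⟨n, hn⟩⟩
  · rintro e ⟨v, hv, rfl⟩ f ⟨w, hw, rfl⟩ hne x hxe hxf
    obtain ⟨⟨-, n, hn⟩, hvE⟩ := mate_spec hv.1 hv.2
    obtain ⟨⟨-, m, hm⟩, hwE⟩ := mate_spec hw.1 hw.2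
    rcases Sym2.mem_iff.mp hxe with rfl | rfl
    · rcases Sym2.mem_iff.mp hxf with h | h
      · exact hne (by rw [h])
      · exact hv.2 (h ▸ hwE)
    · rcases Sym2.mem_iff.mp hxf with h | h
      · exact hw.2 (h ▸ hvE)
      · apply hne
        rw [hn, hm] at h
        obtain ⟨h1, h2⟩ := concat_inj h
        rw [h1]
  · intro e he
    induction e using Sym2.ind with
    | _ a b =>
      rw [SimpleGraph.mem_edgeSet] at he
      obtain ⟨ha, hb, ⟨n, rfl⟩ | ⟨n, rfl⟩⟩ := he
      · by_cases hc : a ∈ Eset U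
        · have : a ++ [n] ∉ Eset U := (kernel U a ha).mp hc _ ⟨hb, n, rfl⟩
          exact ⟨a ++ [n], Sym2.mem_mk_right _ _, hb, this⟩
        · exact ⟨a, Sym2.mem_mk_left _ _, ha, hc⟩
      · by_cases hc : b ∈ Eset U
        · have : b ++ [n] ∉ Eset U := (kernel U b hb).mp hc _ ⟨ha, n, rfl⟩
          exact ⟨b ++ [n], Sym2.mem_mk_left _ _, ha, this⟩
        · exact ⟨b, Sym2.mem_mk_right _ _, hb, hc⟩
  · rintro e ⟨v, hv, rfl⟩
    refine ⟨v, ⟨Sym2.mem_mk_left _ _, hv⟩, ?_⟩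
    rintro y ⟨hy, hyC⟩
    rcases Sym2.mem_iff.mp hy with rfl | rfl
    · rfl
    · exact absurd (mate_spec hv.1 hv.2).2 hyC.2
  · intro v hv
    exact ⟨s(v, mate U v), ⟨v, hv, rfl⟩, Sym2.mem_mk_left _ _⟩

end KC

namespace KC2

open KC

variable {r : List ℕ} {X : Set ℕ} {T : ℕ → Set (List ℕ)}

lemma ne_root {x : ℕ} {σ : List ℕ} : r ++ [x] ++ σ ≠ r := by
  intro h
  have := congrArg List.length h
  simp [List.length_append] at this

lemma decomp {i i' : ℕ} {j j' : Fin 2} {σ σ' : List ℕ}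
    (h : r ++ [2 * i + (j : ℕ)] ++ σ = r ++ [2 * i' + (j' : ℕ)] ++ σ') :
    i = i' ∧ j = j' ∧ σ = σ' := by
  rw [List.append_assoc, List.append_assoc] at h
  have h2 := List.append_cancel_left h
  rw [List.singleton_append, List.singleton_append] at h2
  injection h2 with h3 h4
  have hj := j.isLt
  have hj' := j'.isLt
  refine ⟨by omega, ?_, h4⟩
  apply Fin.ext
  omega

lemma mem_sub {i : ℕ} (j : Fin 2) {σ : List ℕ} (hi : i ∈ X) (hσ : σ ∈ T i) :
    r ++ [2 * i + (j : ℕ)] ++ σ ∈ combineAt r X T :=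
  Or.inr ⟨i, hi, j, σ, hσ, rfl⟩

lemma sub_mem {i : ℕ} {j : Fin 2} {σ : List ℕ}
    (h : r ++ [2 * i + (j : ℕ)] ++ σ ∈ combineAt r X T) : σ ∈ T i := by
  rcases h with h | ⟨i', hi', j', σ', hσ', heq⟩
  · exact absurd h ne_root
  · obtain ⟨rfl, rfl, rfl⟩ := decomp heq
    exact hσ'

lemma root_mem : r ∈ combineAt r X T := Or.inl rfl

lemma adj_root_class {t : List ℕ} (h : (treeGraph (combineAt r X T)).Adj r t) :
    ∃ i ∈ X, ∃ j : Fin 2, t = r ++ [2 * i + (j : ℕ)] := by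
  obtain ⟨-, ht, ⟨n, rfl⟩ | ⟨n, hn⟩⟩ := h
  · rcases ht with ht | ⟨i, hi, j, σ, hσ, heq⟩
    · exact absurd (congrArg List.length ht) (by simp)
    · rw [List.append_assoc, List.singleton_append] at heq
      have h2 := List.append_cancel_left heq
      injection h2 with h3 h4
      exact ⟨i, hi, j, by rw [h3]⟩
  · exfalso
    rcases ht with rfl | ⟨i, hi, j, σ, hσ, rfl⟩
    · exact absurd (congrArg List.length hn) (by simp)
    · have := congrArg List.length hn
      simp [List.length_append] at this

lemma phi_inj {i : ℕ} {j : Fin 2} :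
    Function.Injective (fun σ : List ℕ => r ++ [2 * i + (j : ℕ)] ++ σ) :=
  fun _ _ h => List.append_cancel_left h

lemma restrict {C : Set (List ℕ)} {M : Set (Sym2 (List ℕ))} {i : ℕ} (j : Fin 2)
    (hKC : IsKonigCover (treeGraph (combineAt r X T)) C M) (hi : i ∈ X)
    (hroot : s(r, r ++ [2 * i + (j : ℕ)]) ∈ M → r ++ [2 * i + (j : ℕ)] ∉ C) :
    IsKonigCover (treeGraph (T i)) ((fun σ => r ++ [2 * i + (j : ℕ)] ++ σ) ⁻¹' C)
      {e | e ∈ (treeGraph (T i)).edgeSet ∧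
        e.map (fun σ => r ++ [2 * i + (j : ℕ)] ++ σ) ∈ M} := by
  set φ : List ℕ → List ℕ := fun σ => r ++ [2 * i + (j : ℕ)] ++ σ with hφdef
  have hadj : ∀ {σ τ : List ℕ}, (treeGraph (T i)).Adj σ τ →
      (treeGraph (combineAt r X T)).Adj (φ σ) (φ τ) := by
    rintro σ τ ⟨hσ, hτ, ⟨n, rfl⟩ | ⟨n, rfl⟩⟩
    · exact ⟨mem_sub j hi hσ, mem_sub j hi hτ,
        Or.inl ⟨n, (List.append_assoc _ _ _).symm⟩⟩
    · exact ⟨mem_sub j hi hσ, mem_sub j hi hτ,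
        Or.inr ⟨n, (List.append_assoc _ _ _).symm⟩⟩
  refine ⟨fun e he => he.1, ?_, ?_, ?_, ?_⟩
  · intro e he f hf hne x hxe hxf
    have hmapne : e.map φ ≠ f.map φ := fun h => hne (Sym2.map.injective phi_inj h)
    exact hKC.2.1 he.2 hf.2 hmapne (φ x) (Sym2.mem_map.mpr ⟨x, hxe, rfl⟩)
      (Sym2.mem_map.mpr ⟨x, hxf, rfl⟩)
  · intro e he
    induction e using Sym2.ind with
    | _ σ τ =>
      have h := hadj ((SimpleGraph.mem_edgeSet _).mp he)
      obtain ⟨v, hv, hvC⟩ := hKC.2.2.1 s(φ σ, φ τ) ((SimpleGraph.mem_edgeSet _).mpr h)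
      rcases Sym2.mem_iff.mp hv with rfl | rfl
      · exact ⟨σ, Sym2.mem_mk_left _ _, hvC⟩
      · exact ⟨τ, Sym2.mem_mk_right _ _, hvC⟩
  · intro e he
    induction e using Sym2.ind with
    | _ σ τ =>
      obtain ⟨v, ⟨hv, hvC⟩, huniq⟩ := hKC.2.2.2.1 _ he.2
      rw [Sym2.map_pair_eq, Sym2.mem_iff] at hv
      have key : ∀ y, (y ∈ s(σ, τ) ∧ φ y ∈ C) → φ y = v := by
        rintro y ⟨hy, hyC⟩
        refine huniq (φ y) ⟨?_, hyC⟩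
        rw [Sym2.map_pair_eq]
        rcases Sym2.mem_iff.mp hy with rfl | rfl
        · exact Sym2.mem_mk_left _ _
        · exact Sym2.mem_mk_right _ _
      rcases hv with rfl | rfl
      · refine ⟨σ, ⟨Sym2.mem_mk_left _ _, hvC⟩, ?_⟩
        rintro y ⟨hy, hyC⟩
        exact phi_inj (key y ⟨hy, hyC⟩)
      · refine ⟨τ, ⟨Sym2.mem_mk_right _ _, hvC⟩, ?_⟩
        rintro y ⟨hy, hyC⟩
        exact phi_inj (key y ⟨hy, hyC⟩)
  · intro v hv
    obtain ⟨e, heM, hve⟩ := hKC.2.2.2.2 (φ v) hv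
    obtain ⟨c, rfl⟩ := Sym2.mem_iff_exists.mp hve
    have he := (SimpleGraph.mem_edgeSet _).mp (hKC.1 heM)
    obtain ⟨hφvS, hcS, ⟨n, hn⟩ | ⟨n, hn⟩⟩ := he
    · -- c = φ v ++ [n]
      have hvT : v ∈ T i := sub_mem (j := j) (show r ++ [2 * i + (j : ℕ)] ++ v ∈ _ from hφvS)
      have hc' : c = φ (v ++ [n]) := by
        rw [hn, hφdef]
        simp [List.append_assoc]
      have hvnT : v ++ [n] ∈ T i := sub_mem (j := j) (show r ++ [2 * i + (j : ℕ)] ++ (v ++ [n]) ∈ _ from hc' ▸ hcS)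
      refine ⟨s(v, v ++ [n]),
        ⟨(SimpleGraph.mem_edgeSet _).mpr ⟨hvT, hvnT, Or.inl ⟨n, rfl⟩⟩, ?_⟩,
        Sym2.mem_mk_left _ _⟩
      rw [Sym2.map_pair_eq, ← hc']
      exact heM
    · -- φ v = c ++ [n]
      rcases List.eq_nil_or_concat' v with rfl | ⟨v', n', rfl⟩
      · exfalso
        have h0 : φ ([] : List ℕ) = r ++ [2 * i + (j : ℕ)] := by
          rw [hφdef]; simp
        rw [h0] at hn
        obtain ⟨rfl, rfl⟩ := KC.concat_inj hn
        refine hroot ?_ (h0 ▸ hv)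
        rw [← h0, Sym2.eq_swap]
        exact heM
      · have hvv : φ (v' ++ [n']) = φ v' ++ [n'] := by
          rw [hφdef]; simp [List.append_assoc]
        rw [hvv] at hn
        obtain ⟨hc, -⟩ := KC.concat_inj hn.symm
        have hvT : v' ++ [n'] ∈ T i := sub_mem (j := j) (show r ++ [2 * i + (j : ℕ)] ++ (v' ++ [n']) ∈ _ from hφvS)
        have hv'T : v' ∈ T i := by
          rw [hc] at hcS
          exact sub_mem (j := j) (show r ++ [2 * i + (j : ℕ)] ++ v' ∈ _ from hcS)
        refine ⟨s(v', v' ++ [n']),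
          ⟨(SimpleGraph.mem_edgeSet _).mpr ⟨hv'T, hvT, Or.inl ⟨n', rfl⟩⟩, ?_⟩,
          Sym2.mem_mk_right _ _⟩
        rw [Sym2.map_pair_eq, hvv, Sym2.eq_swap, ← hvv, ← hc]
        exact heM

end KC2

namespace KC2

lemma claimA {r : List ℕ} {X : Set ℕ} {T : ℕ → Set (List ℕ)}
    (hall : ∀ i ∈ X, CodesOne [] (T i)) :
    CodesZero r (combineAt r X T) := by
  intro C M hKC hrC
  obtain ⟨e, heM, hre⟩ := hKC.2.2.2.2 r hrC
  obtain ⟨t, rfl⟩ := Sym2.mem_iff_exists.mp hre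
  have hadj : (treeGraph (combineAt r X T)).Adj r t :=
    (SimpleGraph.mem_edgeSet _).mp (hKC.1 heM)
  obtain ⟨i, hi, j, rfl⟩ := adj_root_class hadj
  have htC : r ++ [2 * i + (j : ℕ)] ∉ C := by
    intro htC
    obtain ⟨v, -, huniq⟩ := hKC.2.2.2.1 _ heM
    have h1 := huniq r ⟨Sym2.mem_mk_left _ _, hrC⟩
    have h2 := huniq _ ⟨Sym2.mem_mk_right _ _, htC⟩
    have h3 : r ++ [2 * i + (j : ℕ)] = r := by rw [h2, ← h1]
    have := congrArg List.length h3
    simp at this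
  have hres := restrict j hKC hi (fun _ => htC)
  have h4 := hall i hi _ _ hres
  exact htC (by simpa using h4)

lemma claimB {r : List ℕ} {X : Set ℕ} {T : ℕ → Set (List ℕ)} {i₀ : ℕ}
    (hT0 : [] ∈ T i₀) (hi₀ : i₀ ∈ X) (hz : CodesZero [] (T i₀)) :
    CodesOne r (combineAt r X T) := by
  intro C M hKC
  by_contra hrC
  have hadjj : ∀ j : Fin 2,
      (treeGraph (combineAt r X T)).Adj r (r ++ [2 * i₀ + (j : ℕ)]) := by
    intro j
    refine ⟨root_mem, ?_, Or.inl ⟨2 * i₀ + (j : ℕ), rfl⟩⟩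
    have := mem_sub (r := r) (T := T) (σ := []) j hi₀ hT0
    simpa using this
  have hpC : ∀ j : Fin 2, r ++ [2 * i₀ + (j : ℕ)] ∈ C := by
    intro j
    obtain ⟨v, hv, hvC⟩ := hKC.2.2.1 s(r, r ++ [2 * i₀ + (j : ℕ)])
      ((SimpleGraph.mem_edgeSet _).mpr (hadjj j))
    rcases Sym2.mem_iff.mp hv with rfl | rfl
    · exact absurd hvC hrC
    · exact hvC
  have hjM : ∃ j : Fin 2, s(r, r ++ [2 * i₀ + (j : ℕ)]) ∉ M := by
    by_contra h
    push_neg at h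
    have hne : s(r, r ++ [2 * i₀ + ((0 : Fin 2) : ℕ)]) ≠
        s(r, r ++ [2 * i₀ + ((1 : Fin 2) : ℕ)]) := by
      intro heq
      rcases Sym2.eq_iff.mp heq with ⟨-, h2⟩ | ⟨h1, -⟩
      · have h3 := List.append_cancel_left h2
        simp at h3
      · have := congrArg List.length h1
        simp at this
    exact hKC.2.1 (h 0) (h 1) hne r (Sym2.mem_mk_left _ _) (Sym2.mem_mk_left _ _)
  obtain ⟨j, hjM⟩ := hjM
  have hres := restrict j hKC hi₀ (fun h => absurd h hjM)
  refine hz _ _ hres ?_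
  simpa using hpC j

end KC2



/-- If every tree `T i` (`i ∈ X`) is good, then their combination `S` at a root `r` is
good, and `S` codes the bit 0 iff every `T i` codes the bit 1 (i.e. iff
`A = {i ∈ X : T i codes 1}` equals `X`). -/
theorem statement13 (r : List ℕ) (X : Set ℕ) (T : ℕ → Set (List ℕ))
    (hT : ∀ i ∈ X, [] ∈ T i ∧ ∀ ⦃σ τ : List ℕ⦄, σ <+: τ → τ ∈ T i → σ ∈ T i)
    (hgood : ∀ i ∈ X, Good [] (T i)) :
    Good r (combineAt r X T) ∧
    (CodesZero r (combineAt r X T) ↔ {i ∈ X | CodesOne [] (T i)} = X) := by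
  have hAiff : ({i ∈ X | CodesOne [] (T i)} = X) ↔ ∀ i ∈ X, CodesOne [] (T i) := by
    constructor
    · intro h i hi
      have : i ∈ {i ∈ X | CodesOne [] (T i)} := by rw [h]; exact hi
      exact this.2
    · intro h
      ext i
      exact ⟨fun hi => hi.1, fun hi => ⟨hi, h i hi⟩⟩
  constructor
  · by_cases hA : ∀ i ∈ X, CodesOne [] (T i)
    · exact Or.inr (KC2.claimA hA)
    · push_neg at hA
      obtain ⟨i₀, hi₀, hni⟩ := hA
      have hz : CodesZero [] (T i₀) := (hgood i₀ hi₀).resolve_left hni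
      exact Or.inl (KC2.claimB (hT i₀ hi₀).1 hi₀ hz)
  · constructor
    · intro hzS
      rw [hAiff]
      by_contra hA
      push_neg at hA
      obtain ⟨i₀, hi₀, hni⟩ := hA
      have hz : CodesZero [] (T i₀) := (hgood i₀ hi₀).resolve_left hni
      have hone := KC2.claimB (r := r) (hT i₀ hi₀).1 hi₀ hz
      obtain ⟨C, M, hKC⟩ := KC.exists_cover (combineAt r X T)
      exact hzS C M hKC (hone C M hKC)
    · intro hA
      exact KC2.claimA (hAiff.mp hA)
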